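/- Let n ≥ 2 and let (C, C̄) be an equitable 2-partition of H(n,q) with quotient matrix S satisfying S₁₁ − S₂₁ = (q−1)n − 2q. For α ∈ 𝒜 let E_α denote the set of essential coordinates of (χ_C)_n^α. If there exist α, β ∈ 𝒜 with E_α ≠ E_β, then for every α ∈ 𝒜 the set E_α has exactly one element. -/

import Mathlib

set_option linter.unusedSectionVars false
set_option linter.unusedVariables false
open Function Finset

/-- `(C, Cᶜ)` is an equitable 2-partition of the graph `G` (both cells nonempty) with
quotient matrix `S`: every vertex of `C` has exactly `S 0 0` neighbors in `C` and `S 0 1`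
neighbors in `Cᶜ`, and every vertex of `Cᶜ` has exactly `S 1 0` neighbors in `C` and
`S 1 1` neighbors in `Cᶜ`. -/
def IsEquitable2 {V : Type*} (G : SimpleGraph V) (C : Set V)
    (S : Matrix (Fin 2) (Fin 2) ℤ) : Prop :=
  C.Nonempty ∧ Cᶜ.Nonempty ∧
    (∀ x ∈ C, ((G.neighborSet x ∩ C).ncard : ℤ) = S 0 0 ∧
      ((G.neighborSet x ∩ Cᶜ).ncard : ℤ) = S 0 1) ∧
    (∀ x ∈ Cᶜ, ((G.neighborSet x ∩ C).ncard : ℤ) = S 1 0 ∧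
      ((G.neighborSet x ∩ Cᶜ).ncard : ℤ) = S 1 1)

/-- The Hamming graph `H(n,q)` on the vertex set `𝒜ⁿ` (where `|𝒜| = q`): two vertices are
adjacent iff they differ in exactly one coordinate. -/
def hammingGraph (n : ℕ) (𝒜 : Type*) [DecidableEq 𝒜] : SimpleGraph (Fin n → 𝒜) where
  Adj x y := hammingDist x y = 1
  symm := ⟨fun (x y : Fin n → 𝒜) h => by
    have h' : hammingDist x y = 1 := h
    show hammingDist y x = 1; rwa [hammingDist_comm]⟩
  loopless := ⟨fun (x : Fin n → 𝒜) h => by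
    have h' : hammingDist x x = 1 := h
    simp [hammingDist_self] at h'⟩

/-- A coordinate `i` is essential for `f` if there exist two inputs differing only in
coordinate `i` at which `f` takes different values. -/
def EssentialCoord {m : ℕ} {𝒜 : Type*} (f : (Fin m → 𝒜) → ℝ) (i : Fin m) : Prop :=
  ∃ x y : Fin m → 𝒜, (∀ j, j ≠ i → x j = y j) ∧ f x ≠ f y

private lemma reach {n : ℕ} {𝒜 : Type*} [DecidableEq 𝒜] (P : (Fin n → 𝒜) → Prop)
    (hP : ∀ z (j : Fin n) a, P z → P (Function.update z j a)) :
    ∀ x y : Fin n → 𝒜, P x → P y := by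
  intro x y hx
  have key : ∀ i : ℕ, P (fun j => if (j : ℕ) < i then y j else x j) := by
    intro i
    induction i with
    | zero => simpa using hx
    | succ i ih =>
      by_cases hi : i < n
      · have he : (fun j : Fin n => if (j : ℕ) < i + 1 then y j else x j)
            = Function.update (fun j : Fin n => if (j : ℕ) < i then y j else x j)
                ⟨i, hi⟩ (y ⟨i, hi⟩) := by
          funext j
          rcases eq_or_ne j ⟨i, hi⟩ with rfl | hj
          · simp
          · have hji : (j : ℕ) ≠ i := fun h => hj (Fin.ext h)
            rw [Function.update_of_ne hj]
            by_cases h1 : (j : ℕ) < i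
            · rw [if_pos (Nat.lt_succ_of_lt h1), if_pos h1]
            · rw [if_neg h1, if_neg (by omega)]
        rw [he]
        exact hP _ _ _ ih
      · have he : (fun j : Fin n => if (j : ℕ) < i + 1 then y j else x j)
            = (fun j : Fin n => if (j : ℕ) < i then y j else x j) := by
          funext j
          have := j.isLt
          rw [if_pos (by omega), if_pos (by omega)]
        rw [he]
        exact ih
  have := key n
  have he : (fun j : Fin n => if (j : ℕ) < n then y j else x j) = y := by
    funext j; rw [if_pos j.isLt]
  rwa [he] at this

private lemma reach' {n : ℕ} {𝒜 : Type*} [DecidableEq 𝒜] (u : (Fin n → 𝒜) → ℝ) (k : Fin n)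
    (hu : ∀ z (j : Fin n) a, j ≠ k → u (Function.update z j a) = u z) :
    ∀ x y : Fin n → 𝒜, x k = y k → u x = u y := by
  intro x y hxy
  have key : ∀ i : ℕ, u (fun j => if (j : ℕ) < i then y j else x j) = u x := by
    intro i
    induction i with
    | zero => simp
    | succ i ih =>
      by_cases hi : i < n
      · have he : (fun j : Fin n => if (j : ℕ) < i + 1 then y j else x j)
            = Function.update (fun j : Fin n => if (j : ℕ) < i then y j else x j)
                ⟨i, hi⟩ (y ⟨i, hi⟩) := by
          funext j
          rcases eq_or_ne j ⟨i, hi⟩ with rfl | hj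
          · simp
          · have hji : (j : ℕ) ≠ i := fun h => hj (Fin.ext h)
            rw [Function.update_of_ne hj]
            by_cases h1 : (j : ℕ) < i
            · rw [if_pos (Nat.lt_succ_of_lt h1), if_pos h1]
            · rw [if_neg h1, if_neg (by omega)]
        rw [he]
        rcases eq_or_ne (⟨i, hi⟩ : Fin n) k with rfl | hik
        · have hv : y (⟨i, hi⟩ : Fin n) = (fun j : Fin n => if (j : ℕ) < i then y j else x j) ⟨i, hi⟩ := by
            simp [← hxy]
          rw [hv, Function.update_eq_self]
          exact ih
        · rw [hu _ _ _ hik]; exact ih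
      · have he : (fun j : Fin n => if (j : ℕ) < i + 1 then y j else x j)
            = (fun j : Fin n => if (j : ℕ) < i then y j else x j) := by
          funext j
          have := j.isLt
          rw [if_pos (by omega), if_pos (by omega)]
        rw [he]; exact ih
  have := key n
  have he : (fun j : Fin n => if (j : ℕ) < n then y j else x j) = y := by
    funext j; rw [if_pos j.isLt]
  rw [he] at this
  exact this.symm

private lemma hamming_adj_iff {m : ℕ} {𝒜 : Type*} [DecidableEq 𝒜] {x y : Fin m → 𝒜} :
    (hammingGraph m 𝒜).Adj x y ↔ ∃ j a, a ≠ x j ∧ y = Function.update x j a := by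
  show hammingDist x y = 1 ↔ _
  rw [hammingDist, Finset.card_eq_one]
  constructor
  · rintro ⟨j, hj⟩
    have hjm : j ∈ ({i | x i ≠ y i} : Finset (Fin m)) := by rw [hj]; exact Finset.mem_singleton_self j
    rw [Finset.mem_filter] at hjm
    refine ⟨j, y j, fun h => hjm.2 h.symm, ?_⟩
    funext i
    rcases eq_or_ne i j with rfl | hij
    · rw [Function.update_self]
    · by_contra hne
      have : i ∈ ({i | x i ≠ y i} : Finset (Fin m)) := by
        rw [Finset.mem_filter]
        refine ⟨Finset.mem_univ _, ?_⟩
        rw [Function.update_of_ne hij] at hne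
        exact fun h => hne h.symm
      rw [hj, Finset.mem_singleton] at this
      exact hij this
  · rintro ⟨j, a, ha, rfl⟩
    refine ⟨j, ?_⟩
    ext i
    rw [Finset.mem_filter, Finset.mem_singleton]
    constructor
    · rintro ⟨-, hne⟩
      by_contra hij
      rw [Function.update_of_ne hij] at hne
      exact hne rfl
    · rintro rfl
      exact ⟨Finset.mem_univ _, by rw [Function.update_self]; exact fun h => ha h.symm⟩

private lemma neighbor_sum {m : ℕ} {𝒜 : Type*} [Fintype 𝒜] [DecidableEq 𝒜]
    (C : Set (Fin m → 𝒜)) (x : Fin m → 𝒜) :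
    ∑ j : Fin m, ∑ a : 𝒜, C.indicator (fun _ => (1:ℝ)) (Function.update x j a)
      = (((hammingGraph m 𝒜).neighborSet x ∩ C).ncard : ℝ)
        + m * C.indicator (fun _ => (1:ℝ)) x := by
  classical
  set f := C.indicator (fun _ => (1:ℝ)) with hf
  have hfi : ∀ z, f z = if z ∈ C then (1:ℝ) else 0 := fun z => Set.indicator_apply _ _ _
  set T : Fin m → Finset 𝒜 := fun j => (Finset.univ.erase (x j)).filter (fun a => Function.update x j a ∈ C) with hT
  have hsplit : ∀ j : Fin m, ∑ a : 𝒜, f (Function.update x j a)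
      = ((T j).card : ℝ) + f x := by
    intro j
    rw [← Finset.sum_erase_add Finset.univ _ (Finset.mem_univ (x j)), Function.update_eq_self]
    congr 1
    rw [Finset.sum_congr rfl (fun a _ => hfi (Function.update x j a)), Finset.sum_boole]
  rw [Finset.sum_congr rfl (fun j _ => hsplit j), Finset.sum_add_distrib, Finset.sum_const,
    Finset.card_univ, Fintype.card_fin, nsmul_eq_mul]
  congr 1
  rw [← Nat.cast_sum]
  congr 1
  rw [Set.ncard_eq_toFinset_card']
  have hset : ((hammingGraph m 𝒜).neighborSet x ∩ C).toFinset
      = Finset.univ.biUnion (fun j => (T j).image (Function.update x j)) := by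
    ext y
    simp only [Set.mem_toFinset, Set.mem_inter_iff, SimpleGraph.mem_neighborSet,
      Finset.mem_biUnion, Finset.mem_image, Finset.mem_filter, Finset.mem_erase,
      Finset.mem_univ, true_and, hT]
    constructor
    · rintro ⟨hadj, hC⟩
      obtain ⟨j, a, ha, rfl⟩ := hamming_adj_iff.mp hadj
      exact ⟨j, a, ⟨⟨ha, trivial⟩, hC⟩, rfl⟩
    · rintro ⟨j, a, ⟨⟨ha, -⟩, hC⟩, rfl⟩
      exact ⟨hamming_adj_iff.mpr ⟨j, a, ha, rfl⟩, hC⟩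
  rw [hset, Finset.card_biUnion]
  · refine Finset.sum_congr rfl (fun j _ => ?_)
    rw [Finset.card_image_of_injective _ (Function.update_injective x j)]
  · intro j _ j' _ hjj'
    rw [Function.onFun, Finset.disjoint_left]
    rintro y hy hy'
    simp only [Finset.mem_image, Finset.mem_filter, Finset.mem_erase, Finset.mem_univ, true_and, hT] at hy hy'
    obtain ⟨a, ⟨⟨ha, -⟩, -⟩, rfl⟩ := hy
    obtain ⟨a', ⟨⟨ha', -⟩, -⟩, heq⟩ := hy'
    have h1 := congrFun heq j
    rw [Function.update_self, Function.update_of_ne hjj'] at h1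
    exact ha h1.symm

section Abstract
open Function Finset
variable {n : ℕ} {𝒜 : Type*} [Fintype 𝒜] [DecidableEq 𝒜] [Nonempty 𝒜]

private lemma const_diff (hn : 1 ≤ n) (h : (Fin n → 𝒜) → ℝ)
    (Heq : ∀ y, ∑ j : Fin n, ∑ a : 𝒜, h (Function.update y j a)
      = ((Fintype.card 𝒜 : ℝ) * n - Fintype.card 𝒜) * h y)
    (k : Fin n) (b c : 𝒜) (x x' : Fin n → 𝒜) :
    h (Function.update x k b) - h (Function.update x k c)
      = h (Function.update x' k b) - h (Function.update x' k c) := by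
  classical
  set q : ℝ := (Fintype.card 𝒜 : ℝ) with hq
  set u : (Fin n → 𝒜) → ℝ := fun z => h (Function.update z k b) - h (Function.update z k c) with hu
  have hukk : ∀ z a, u (Function.update z k a) = u z := by
    intro z a
    simp only [hu, Function.update_idem]
  have reb : ∀ (z : Fin n → 𝒜) (v : 𝒜), ∑ j : Fin n, ∑ a : 𝒜, h (Function.update (Function.update z k v) j a)
      = (∑ j ∈ Finset.univ.erase k, ∑ a : 𝒜, h (Function.update (Function.update z j a) k v))
        + ∑ a : 𝒜, h (Function.update z k a) := by
    intro z v
    rw [← Finset.sum_erase_add _ _ (Finset.mem_univ k)]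
    congr 1
    · refine Finset.sum_congr rfl fun j hj => Finset.sum_congr rfl fun a _ => ?_
      have hkj : k ≠ j := (Finset.ne_of_mem_erase hj).symm
      rw [Function.update_comm hkj]
    · refine Finset.sum_congr rfl fun a _ => ?_
      rw [Function.update_idem]
  have hueq : ∀ z, ∑ j ∈ Finset.univ.erase k, ∑ a : 𝒜, u (Function.update z j a)
      = (q * n - q) * u z := by
    intro z
    have hb := Heq (Function.update z k b)
    have hc := Heq (Function.update z k c)
    rw [reb z b] at hb
    rw [reb z c] at hc
    have : ∑ j ∈ Finset.univ.erase k, ∑ a : 𝒜, u (Function.update z j a)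
        = (∑ j ∈ Finset.univ.erase k, ∑ a : 𝒜, h (Function.update (Function.update z j a) k b))
          - (∑ j ∈ Finset.univ.erase k, ∑ a : 𝒜, h (Function.update (Function.update z j a) k c)) := by
      rw [← Finset.sum_sub_distrib]
      refine Finset.sum_congr rfl fun j hj => ?_
      rw [← Finset.sum_sub_distrib]
    rw [this]
    simp only [hu]
    linarith [hb, hc]
  obtain ⟨x₀, hx₀⟩ := Finite.exists_max u
  have hcard : ((Finset.univ.erase k).card : ℝ) = (n : ℝ) - 1 := by
    rw [Finset.card_erase_of_mem (Finset.mem_univ k), Finset.card_univ, Fintype.card_fin,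
      Nat.cast_sub hn, Nat.cast_one]
  have closed : ∀ z (j : Fin n) a, u z = u x₀ → u (Function.update z j a) = u x₀ := by
    intro z j a hz
    rcases eq_or_ne j k with rfl | hjk
    · rw [hukk]; exact hz
    · have h1 := hueq z
      rw [hz] at h1
      have hle : ∀ j' ∈ Finset.univ.erase k, ∑ a : 𝒜, u (Function.update z j' a) ≤ q * u x₀ := by
        intro j' _
        calc ∑ a : 𝒜, u (Function.update z j' a) ≤ ∑ _a : 𝒜, u x₀ :=
              Finset.sum_le_sum (fun a _ => hx₀ _)
          _ = q * u x₀ := by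
              rw [Finset.sum_const, Finset.card_univ, nsmul_eq_mul, hq]
      have htot : ∑ _j' ∈ Finset.univ.erase k, (q * u x₀) = (q * n - q) * u x₀ := by
        rw [Finset.sum_const, nsmul_eq_mul, hcard]
        ring
      have heach := (Finset.sum_eq_sum_iff_of_le hle).mp (by rw [h1, htot])
      have hj' := heach j (Finset.mem_erase.mpr ⟨hjk, Finset.mem_univ j⟩)
      have hle2 : ∀ a' ∈ (Finset.univ : Finset 𝒜), u (Function.update z j a') ≤ u x₀ :=
        fun a' _ => hx₀ _
      have := (Finset.sum_eq_sum_iff_of_le hle2).mp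
        (by rw [hj', Finset.sum_const, Finset.card_univ, nsmul_eq_mul, hq])
      exact this a (Finset.mem_univ a)
  have hall : ∀ z, u z = u x₀ :=
    fun z => reach (fun w => u w = u x₀) (fun z' j a hz => closed z' j a hz) x₀ z rfl
  show u x = u x'
  rw [hall x, hall x']

private lemma nonessential_eq {h : (Fin n → 𝒜) → ℝ} {j : Fin n}
    (hj : ¬ EssentialCoord h j) :
    ∀ x y : Fin n → 𝒜, (∀ j', j' ≠ j → x j' = y j') → h x = h y := by
  intro x y hxy
  by_contra hne
  exact hj ⟨x, y, hxy, hne⟩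

private lemma only_coord {h : (Fin n → 𝒜) → ℝ} {k : Fin n}
    (hone : ∀ j, j ≠ k → ¬ EssentialCoord h j) :
    ∀ x y : Fin n → 𝒜, x k = y k → h x = h y := by
  refine reach' h k (fun z j a hjk => ?_)
  exact nonessential_eq (hone j hjk) (Function.update z j a) z
    (fun j' hj' => Function.update_of_ne hj' a z)

private lemma one_coord_struct (hn : 1 ≤ n) (h : (Fin n → 𝒜) → ℝ)
    (Heq : ∀ y, ∑ j : Fin n, ∑ a : 𝒜, h (Function.update y j a)
      = ((Fintype.card 𝒜 : ℝ) * n - Fintype.card 𝒜) * h y)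
    (k : Fin n) (hone : ∀ j, j ≠ k → ¬ EssentialCoord h j) :
    ∃ ψ : 𝒜 → ℝ, (∀ x, h x = ψ (x k)) ∧ ∑ a : 𝒜, ψ a = 0 := by
  classical
  obtain ⟨x₀⟩ : Nonempty (Fin n → 𝒜) := inferInstance
  set ψ : 𝒜 → ℝ := fun a => h (Function.update x₀ k a) with hψdef
  have hψ : ∀ x, h x = ψ (x k) := by
    intro x
    exact only_coord hone x (Function.update x₀ k (x k)) (by rw [Function.update_self])
  refine ⟨ψ, hψ, ?_⟩
  have heq := Heq x₀
  have hsplit : ∑ j : Fin n, ∑ a : 𝒜, h (Function.update x₀ j a)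
      = (∑ _j ∈ Finset.univ.erase k, ∑ _a : 𝒜, h x₀) + ∑ a : 𝒜, ψ a := by
    rw [← Finset.sum_erase_add _ _ (Finset.mem_univ k)]
    congr 1
    refine Finset.sum_congr rfl fun j hj => Finset.sum_congr rfl fun a _ => ?_
    have hjk : j ≠ k := Finset.ne_of_mem_erase hj
    rw [hψ (Function.update x₀ j a), Function.update_of_ne (Ne.symm hjk), ← hψ x₀]
  rw [hsplit] at heq
  have hcard : ((Finset.univ.erase k).card : ℝ) = (n : ℝ) - 1 := by
    rw [Finset.card_erase_of_mem (Finset.mem_univ k), Finset.card_univ, Fintype.card_fin,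
      Nat.cast_sub hn, Nat.cast_one]
  rw [Finset.sum_const, Finset.sum_const, Finset.card_univ, nsmul_eq_mul, nsmul_eq_mul, hcard] at heq
  have hx0k : h x₀ = ψ (x₀ k) := hψ x₀
  nlinarith [heq]

private lemma no_coord_zero (hn : 1 ≤ n) (h : (Fin n → 𝒜) → ℝ)
    (Heq : ∀ y, ∑ j : Fin n, ∑ a : 𝒜, h (Function.update y j a)
      = ((Fintype.card 𝒜 : ℝ) * n - Fintype.card 𝒜) * h y)
    (hno : ∀ j, ¬ EssentialCoord h j) : ∀ x, h x = 0 := by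
  classical
  obtain ⟨x₀⟩ : Nonempty (Fin n → 𝒜) := inferInstance
  have hconst : ∀ x, h x = h x₀ := by
    intro x
    refine reach (fun z => h z = h x₀) (fun z j a hz => ?_) x₀ x rfl
    rw [← hz]
    exact nonessential_eq (hno j) (Function.update z j a) z
      (fun j' hj' => Function.update_of_ne hj' a z)
  have heq := Heq x₀
  have hL : ∑ j : Fin n, ∑ a : 𝒜, h (Function.update x₀ j a)
      = (n : ℝ) * ((Fintype.card 𝒜 : ℝ) * h x₀) := by
    rw [Finset.sum_congr rfl (fun j _ => Finset.sum_congr rfl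
      (fun a _ => hconst (Function.update x₀ j a)))]
    rw [Finset.sum_const, Finset.sum_const, Finset.card_univ, Finset.card_univ,
      nsmul_eq_mul, nsmul_eq_mul, Fintype.card_fin]
  rw [hL] at heq
  have hq1 : (0:ℝ) < (Fintype.card 𝒜 : ℝ) := by
    exact_mod_cast Fintype.card_pos
  have hx0 : h x₀ = 0 := by nlinarith [heq]
  intro x
  rw [hconst x, hx0]

set_option maxHeartbeats 2000000 in
private lemma two_coord_struct (hn : 1 ≤ n) (h : (Fin n → 𝒜) → ℝ)
    (Heq : ∀ y, ∑ j : Fin n, ∑ a : 𝒜, h (Function.update y j a)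
      = ((Fintype.card 𝒜 : ℝ) * n - Fintype.card 𝒜) * h y)
    (hT : ∀ x, h x = -1 ∨ h x = 0 ∨ h x = 1)
    (k l : Fin n) (hkl : k ≠ l) (hk : EssentialCoord h k) (hl : EssentialCoord h l) :
    ∃ (A B : Finset 𝒜) (b c b' c' : 𝒜), b ∈ A ∧ c ∉ A ∧ b' ∈ B ∧ c' ∉ B ∧
      ∀ x, h x = (if x k ∈ A then (1:ℝ) else 0) + (if x l ∈ B then (1:ℝ) else 0) - 1 := by
  classical
  obtain ⟨x₀⟩ : Nonempty (Fin n → 𝒜) := inferInstance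
  set Dk : 𝒜 → 𝒜 → ℝ := fun s t => h (Function.update x₀ k s) - h (Function.update x₀ k t) with hDk
  set Dl : 𝒜 → 𝒜 → ℝ := fun s t => h (Function.update x₀ l s) - h (Function.update x₀ l t) with hDl
  have Kk : ∀ (x : Fin n → 𝒜) s t, h (Function.update x k s) - h (Function.update x k t) = Dk s t :=
    fun x s t => const_diff hn h Heq k s t x x₀
  have Kl : ∀ (x : Fin n → 𝒜) s t, h (Function.update x l s) - h (Function.update x l t) = Dl s t :=
    fun x s t => const_diff hn h Heq l s t x x₀
  -- nonzero increments from essentiality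
  have hkey : ∀ (j : Fin n), EssentialCoord h j →
      ∃ s t, h (Function.update x₀ j s) - h (Function.update x₀ j t) ≠ 0 := by
    rintro j ⟨x₁, x₂, hagree, hne⟩
    refine ⟨x₂ j, x₁ j, ?_⟩
    have hx2 : Function.update x₁ j (x₂ j) = x₂ := by
      funext i
      rcases eq_or_ne i j with rfl | hij
      · rw [Function.update_self]
      · rw [Function.update_of_ne hij]; exact hagree i hij
    have := const_diff hn h Heq j (x₂ j) (x₁ j) x₀ x₁
    rw [this, hx2, Function.update_eq_self]
    exact sub_ne_zero_of_ne (Ne.symm hne)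
  obtain ⟨s0, t0, hd0⟩ := hkey k hk
  obtain ⟨s0', t0', he0⟩ := hkey l hl
  -- the four corner values
  have hw1 : ∀ s s' t : 𝒜, h (Function.update (Function.update x₀ k s) l t)
      - h (Function.update (Function.update x₀ k s') l t) = Dk s s' := by
    intro s s' t
    rw [show Function.update (Function.update x₀ k s) l t
        = Function.update (Function.update x₀ l t) k s from Function.update_comm hkl s t x₀,
      show Function.update (Function.update x₀ k s') l t
        = Function.update (Function.update x₀ l t) k s' from Function.update_comm hkl s' t x₀]
    exact Kk _ s s'
  have hw2 : ∀ s t t' : 𝒜, h (Function.update (Function.update x₀ k s) l t)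
      - h (Function.update (Function.update x₀ k s) l t') = Dl t t' :=
    fun s t t' => Kl _ t t'
  have hsgn : ∃ b c b' c' : 𝒜, Dk b c = 1 ∧ Dl b' c' = 1 := by
    have e1 := hw1 s0 t0 t0'
    have e2 := hw2 t0 s0' t0'
    have e3 := hw2 s0 s0' t0'
    have m1 := hT (Function.update (Function.update x₀ k t0) l t0')
    have m2 := hT (Function.update (Function.update x₀ k s0) l t0')
    have m3 := hT (Function.update (Function.update x₀ k t0) l s0')
    have m4 := hT (Function.update (Function.update x₀ k s0) l s0')
    have hDanti : ∀ s t : 𝒜, Dk t s = - Dk s t := by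
      intro s t; simp only [hDk]; ring
    have hDanti' : ∀ s t : 𝒜, Dl t s = - Dl s t := by
      intro s t; simp only [hDl]; ring
    have hd1 : Dk s0 t0 = 1 ∨ Dk s0 t0 = -1 := by
      rcases m1 with h1|h1|h1 <;> rcases m2 with h2|h2|h2 <;> rcases m3 with h3|h3|h3 <;>
        rcases m4 with h4|h4|h4 <;>
        first
          | (left; linarith)
          | (right; linarith)
          | (exact absurd (show Dk s0 t0 = 0 by linarith) hd0)
          | (exact absurd (show Dl s0' t0' = 0 by linarith) he0)
    have he1 : Dl s0' t0' = 1 ∨ Dl s0' t0' = -1 := by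
      rcases m1 with h1|h1|h1 <;> rcases m2 with h2|h2|h2 <;> rcases m3 with h3|h3|h3 <;>
        rcases m4 with h4|h4|h4 <;>
        first
          | (left; linarith)
          | (right; linarith)
          | (exact absurd (show Dk s0 t0 = 0 by linarith) hd0)
          | (exact absurd (show Dl s0' t0' = 0 by linarith) he0)
    rcases hd1 with hd1 | hd1 <;> rcases he1 with he1 | he1
    · exact ⟨s0, t0, s0', t0', hd1, he1⟩
    · exact ⟨s0, t0, t0', s0', hd1, by rw [hDanti']; linarith⟩
    · exact ⟨t0, s0, s0', t0', by rw [hDanti]; linarith, he1⟩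
    · exact ⟨t0, s0, t0', s0', by rw [hDanti]; linarith, by rw [hDanti']; linarith⟩
  obtain ⟨b, c, b', c', hb1, hb'1⟩ := hsgn
  have hchain1 : ∀ (x : Fin n → 𝒜) (s s' t : 𝒜), h (Function.update (Function.update x k s) l t)
      - h (Function.update (Function.update x k s') l t) = Dk s s' := by
    intro x s s' t
    rw [show Function.update (Function.update x k s) l t
        = Function.update (Function.update x l t) k s from Function.update_comm hkl s t x,
      show Function.update (Function.update x k s') l t
        = Function.update (Function.update x l t) k s' from Function.update_comm hkl s' t x]
    exact Kk _ s s'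
  have hvm : ∀ x : Fin n → 𝒜, h (Function.update (Function.update x k c) l c') = -1 := by
    intro x
    have p1 := hchain1 x b c c'
    have p2 := Kl (Function.update x k b) b' c'
    have t1 := hT (Function.update (Function.update x k c) l c')
    have t2 := hT (Function.update (Function.update x k b) l b')
    have t3 := hT (Function.update (Function.update x k b) l c')
    rcases t1 with h1|h1|h1 <;> rcases t2 with h2|h2|h2 <;> linarith
  have hDk01 : ∀ a : 𝒜, Dk a c = 0 ∨ Dk a c = 1 := by
    intro a
    have q1 := hchain1 x₀ a c c'
    have q2 := Kl (Function.update x₀ k a) b' c'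
    have q3 := hvm x₀
    have t1 := hT (Function.update (Function.update x₀ k a) l c')
    have t2 := hT (Function.update (Function.update x₀ k a) l b')
    rcases t1 with h1|h1|h1 <;> rcases t2 with h2|h2|h2 <;>
      first | (left; linarith) | (right; linarith)
  have hDl01 : ∀ t : 𝒜, Dl t c' = 0 ∨ Dl t c' = 1 := by
    intro t
    have r1 := Kl (Function.update x₀ k c) t c'
    have r2 := hchain1 x₀ b c t
    have q3 := hvm x₀
    have t1 := hT (Function.update (Function.update x₀ k c) l t)
    have t2 := hT (Function.update (Function.update x₀ k b) l t)
    rcases t1 with h1|h1|h1 <;> rcases t2 with h2|h2|h2 <;>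
      first | (left; linarith) | (right; linarith)
  refine ⟨Finset.univ.filter (fun a => Dk a c = 1), Finset.univ.filter (fun t => Dl t c' = 1),
    b, c, b', c', by simp [hb1], ?_, by simp [hb'1], ?_, ?_⟩
  · simp only [Finset.mem_filter, Finset.mem_univ, true_and]
    rw [show Dk c c = 0 by simp only [hDk]; ring]
    norm_num
  · simp only [Finset.mem_filter, Finset.mem_univ, true_and]
    rw [show Dl c' c' = 0 by simp only [hDl]; ring]
    norm_num
  · intro x
    simp only [Finset.mem_filter, Finset.mem_univ, true_and]
    have f1 : h x - h (Function.update x k c) = Dk (x k) c := by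
      have := Kk x (x k) c
      rwa [Function.update_eq_self] at this
    have f2 : h (Function.update x k c) - h (Function.update (Function.update x k c) l c')
        = Dl (x l) c' := by
      have := Kl (Function.update x k c) ((Function.update x k c) l) c'
      rwa [Function.update_eq_self, Function.update_of_ne (Ne.symm hkl)] at this
    have f3 := hvm x
    have g1 : (if Dk (x k) c = 1 then (1:ℝ) else 0) = Dk (x k) c := by
      rcases hDk01 (x k) with h0 | h0
      · rw [h0, if_neg (by norm_num)]
      · rw [h0, if_pos rfl]
    have g2 : (if Dl (x l) c' = 1 then (1:ℝ) else 0) = Dl (x l) c' := by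
      rcases hDl01 (x l) with h0 | h0
      · rw [h0, if_neg (by norm_num)]
      · rw [h0, if_pos rfl]
    rw [g1, g2]
    linarith

private lemma rigid (F G : (Fin n → 𝒜) → ℝ)
    (hF01 : ∀ x, F x = 0 ∨ F x = 1) (hG01 : ∀ x, G x = 0 ∨ G x = 1)
    (k l : Fin n) (hkl : k ≠ l) (A B : Finset 𝒜)
    (b c : 𝒜) (hb : b ∈ A) (hc : c ∉ A)
    (hGk : ∀ x y : Fin n → 𝒜, (∀ j, j ≠ k → x j = y j) → G x = G y)
    (hform : ∀ x, F x - G x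
      = (if x k ∈ A then (1:ℝ) else 0) + (if x l ∈ B then (1:ℝ) else 0) - 1) :
    ∀ x, F x = if x k ∈ A then (1:ℝ) else 0 := by
  have hG : ∀ y, G y = if y l ∈ B then (0:ℝ) else 1 := by
    intro y
    by_cases hB : y l ∈ B
    · rw [if_pos hB]
      have h1 := hform (Function.update y k b)
      rw [Function.update_self, if_pos hb,
        Function.update_of_ne (Ne.symm hkl), if_pos hB] at h1
      have hGG : G (Function.update y k b) = G y :=
        hGk _ _ (fun j hj => Function.update_of_ne hj b y)
      rcases hF01 (Function.update y k b) with h2|h2 <;> rcases hG01 y with h3|h3 <;> linarith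
    · rw [if_neg hB]
      have h1 := hform (Function.update y k c)
      rw [Function.update_self, if_neg hc,
        Function.update_of_ne (Ne.symm hkl), if_neg hB] at h1
      have hGG : G (Function.update y k c) = G y :=
        hGk _ _ (fun j hj => Function.update_of_ne hj c y)
      rcases hF01 (Function.update y k c) with h2|h2 <;> rcases hG01 y with h3|h3 <;> linarith
  intro x
  have h1 := hform x
  rw [hG x] at h1
  by_cases hB : x l ∈ B
  · rw [if_pos hB, if_pos hB] at h1; linarith
  · rw [if_neg hB, if_neg hB] at h1; linarith

end Abstract

/-- here the ambient Hamming graph is `H(n+1, q)`, `n + 1 ≥ 2`, and the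
restriction `(χ_C)_{n+1}^α` fixing the last coordinate to `α` is `y ↦ χ_C (snoc y α)`:
if the sets of essential coordinates `E_α` of the restrictions are not all equal, then
every `E_α` has exactly one element. -/
theorem stmt16 {𝒜 : Type*} [Fintype 𝒜] [DecidableEq 𝒜] (q n : ℕ)
    (hq : Fintype.card 𝒜 = q) (hq2 : 2 ≤ q) (hn : 1 ≤ n)
    (C : Set (Fin (n + 1) → 𝒜)) (S : Matrix (Fin 2) (Fin 2) ℤ)
    (hS : IsEquitable2 (hammingGraph (n + 1) 𝒜) C S)
    (heig : S 0 0 - S 1 0 = ((q : ℤ) - 1) * (n + 1) - 2 * q)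
    (hdiff : ∃ α β : 𝒜,
      {i : Fin n | EssentialCoord
          (fun y : Fin n → 𝒜 => C.indicator (fun _ => (1 : ℝ)) (Fin.snoc y α)) i} ≠
      {i : Fin n | EssentialCoord
          (fun y : Fin n → 𝒜 => C.indicator (fun _ => (1 : ℝ)) (Fin.snoc y β)) i}) :
    ∀ α : 𝒜,
      {i : Fin n | EssentialCoord
          (fun y : Fin n → 𝒜 => C.indicator (fun _ => (1 : ℝ)) (Fin.snoc y α)) i}.ncard
        = 1 := by
  classical
  subst hq
  haveI hne𝒜 : Nonempty 𝒜 := Fintype.card_pos_iff.mp (by omega)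
  obtain ⟨x₀⟩ : Nonempty (Fin n → 𝒜) := inferInstance
  set Fm : 𝒜 → (Fin n → 𝒜) → ℝ :=
    fun γ y => C.indicator (fun _ => (1:ℝ)) (Fin.snoc y γ) with hFm
  have hFg : ∀ γ : 𝒜,
      (fun y : Fin n → 𝒜 => C.indicator (fun _ => (1 : ℝ)) (Fin.snoc y γ)) = Fm γ := by
    intro γ; funext y; rw [hFm]
  have hf01 : ∀ z : Fin (n+1) → 𝒜,
      C.indicator (fun _ => (1:ℝ)) z = 0 ∨ C.indicator (fun _ => (1:ℝ)) z = 1 := by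
    intro z
    by_cases hz : z ∈ C
    · right; rw [Set.indicator_of_mem hz]
    · left; rw [Set.indicator_of_notMem hz]
  have hF01 : ∀ (γ : 𝒜) x, Fm γ x = 0 ∨ Fm γ x = 1 := fun γ x => hf01 _
  have hTdiff : ∀ (γ δ : 𝒜) x, Fm γ x - Fm δ x = -1 ∨ Fm γ x - Fm δ x = 0 ∨ Fm γ x - Fm δ x = 1 := by
    intro γ δ x
    rcases hF01 γ x with h1|h1 <;> rcases hF01 δ x with h2|h2 <;>
      first | (left; linarith) | (right; left; linarith) | (right; right; linarith)
  -- The global counting identity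
  have key : ∀ x : Fin (n+1) → 𝒜,
      ∑ j : Fin (n+1), ∑ a : 𝒜, C.indicator (fun _ => (1:ℝ)) (Function.update x j a)
        = ((S 1 0 : ℤ) : ℝ) + (((S 0 0 : ℤ) : ℝ) - ((S 1 0 : ℤ) : ℝ) + (n+1))
            * C.indicator (fun _ => (1:ℝ)) x := by
    intro x
    rw [neighbor_sum C x]
    obtain ⟨-, -, hCmem, hCc⟩ := hS
    by_cases hx : x ∈ C
    · have h1 : ((((hammingGraph (n+1) 𝒜).neighborSet x ∩ C).ncard : ℕ) : ℝ)
          = ((S 0 0 : ℤ) : ℝ) := by exact_mod_cast (hCmem x hx).1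
      rw [h1, Set.indicator_of_mem hx]
      push_cast
      ring
    · have h1 : ((((hammingGraph (n+1) 𝒜).neighborSet x ∩ C).ncard : ℕ) : ℝ)
          = ((S 1 0 : ℤ) : ℝ) := by exact_mod_cast (hCc x hx).1
      rw [h1, Set.indicator_of_notMem hx]
      push_cast
      ring
  -- restriction identity
  have restr : ∀ (γ : 𝒜) (y : Fin n → 𝒜),
      ∑ j : Fin n, ∑ a : 𝒜, Fm γ (Function.update y j a)
        = ((S 1 0 : ℤ) : ℝ) + (((S 0 0 : ℤ) : ℝ) - ((S 1 0 : ℤ) : ℝ) + (n+1)) * Fm γ y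
          - ∑ δ : 𝒜, Fm δ y := by
    intro γ y
    have hk := key (Fin.snoc y γ)
    rw [Fin.sum_univ_castSucc] at hk
    have e1 : ∀ j : Fin n, ∑ a : 𝒜,
        C.indicator (fun _ => (1:ℝ)) (Function.update (Fin.snoc y γ) (Fin.castSucc j) a)
          = ∑ a : 𝒜, Fm γ (Function.update y j a) := by
      intro j
      refine Finset.sum_congr rfl fun a _ => ?_
      rw [hFm]
      congr 1
      exact (Fin.snoc_update (α := fun _ => 𝒜) γ y j a).symm
    have e2 : ∑ a : 𝒜, C.indicator (fun _ => (1:ℝ))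
          (Function.update (Fin.snoc y γ) (Fin.last n) a)
        = ∑ δ : 𝒜, Fm δ y := by
      refine Finset.sum_congr rfl fun a _ => ?_
      rw [hFm]
      congr 1
      exact Fin.update_snoc_last (α := fun _ => 𝒜) γ y a
    rw [Finset.sum_congr rfl (fun j _ => e1 j), e2] at hk
    have hFmy : C.indicator (fun _ => (1:ℝ)) (Fin.snoc y γ) = Fm γ y := by rw [hFm]
    rw [hFmy] at hk
    linarith
  -- eigenvalue arithmetic
  have harith : ((S 0 0 : ℤ) : ℝ) - ((S 1 0 : ℤ) : ℝ) + (n+1)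
      = (Fintype.card 𝒜 : ℝ) * n - Fintype.card 𝒜 := by
    have hc : ((S 0 0 : ℤ) : ℝ) - ((S 1 0 : ℤ) : ℝ)
        = ((Fintype.card 𝒜 : ℝ) - 1) * (n+1) - 2 * Fintype.card 𝒜 := by
      have := congrArg (fun z : ℤ => (z : ℝ)) heig
      push_cast at this
      push_cast
      linarith
    linear_combination hc
  -- the difference equation
  have HeqF : ∀ γ δ : 𝒜, ∀ y : Fin n → 𝒜,
      ∑ j : Fin n, ∑ a : 𝒜, (Fm γ (Function.update y j a) - Fm δ (Function.update y j a))
        = ((Fintype.card 𝒜 : ℝ) * n - Fintype.card 𝒜) * (Fm γ y - Fm δ y) := by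
    intro γ δ y
    have h1 := restr γ y
    have h2 := restr δ y
    have hsplit : ∑ j : Fin n, ∑ a : 𝒜,
        (Fm γ (Function.update y j a) - Fm δ (Function.update y j a))
        = (∑ j : Fin n, ∑ a : 𝒜, Fm γ (Function.update y j a))
          - ∑ j : Fin n, ∑ a : 𝒜, Fm δ (Function.update y j a) := by
      rw [← Finset.sum_sub_distrib]
      exact Finset.sum_congr rfl fun j _ => by rw [← Finset.sum_sub_distrib]
    rw [hsplit, h1, h2]
    linear_combination (Fm γ y - Fm δ y) * harith
  -- properties of a one-coordinate difference
  have psiprop : ∀ (γ δ : 𝒜) (j : Fin n) (ψ : 𝒜 → ℝ),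
      (∀ x, Fm γ x - Fm δ x = ψ (x j)) → (∑ a : 𝒜, ψ a = 0) →
      EssentialCoord (fun x => Fm γ x - Fm δ x) j →
      (∃ p, ψ p = 1) ∧ (∃ m', ψ m' = -1) := by
    intro γ δ j ψ hψ hψ0 hess
    have hψT : ∀ a, ψ a = -1 ∨ ψ a = 0 ∨ ψ a = 1 := by
      intro a
      have hh := hψ (Function.update x₀ j a)
      rw [Function.update_self] at hh
      rw [← hh]
      exact hTdiff γ δ _
    obtain ⟨x₁, x₂, hag, hne2⟩ := hess
    have hab : ψ (x₁ j) ≠ ψ (x₂ j) := by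
      rw [← hψ x₁, ← hψ x₂]; exact hne2
    constructor
    · by_contra hcon
      push_neg at hcon
      have hle : ∀ a ∈ Finset.univ, ψ a ≤ (0:ℝ) := by
        intro a _
        rcases hψT a with h|h|h
        · linarith
        · linarith
        · exact absurd h (hcon a)
      have hall := (Finset.sum_eq_zero_iff_of_nonpos hle).mp hψ0
      exact hab (by rw [hall (x₁ j) (Finset.mem_univ _), hall (x₂ j) (Finset.mem_univ _)])
    · by_contra hcon
      push_neg at hcon
      have hle : ∀ a ∈ Finset.univ, (0:ℝ) ≤ ψ a := by
        intro a _
        rcases hψT a with h|h|h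
        · exact absurd h (hcon a)
        · linarith
        · linarith
      have hall := (Finset.sum_eq_zero_iff_of_nonneg hle).mp hψ0
      exact hab (by rw [hall (x₁ j) (Finset.mem_univ _), hall (x₂ j) (Finset.mem_univ _)])
  -- MAIN CLAIM
  have main : ∀ (α β : 𝒜) (k : Fin n), EssentialCoord (Fm α) k → ¬ EssentialCoord (Fm β) k →
      ∀ γ : 𝒜, ∃ (k' : Fin n) (A' : Finset 𝒜) (p m' : 𝒜), p ∈ A' ∧ m' ∉ A' ∧
        ∀ y, Fm γ y = (if y k' ∈ A' then (1:ℝ) else 0) := by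
    intro α β k hkα hkβ γ
    have hkh : EssentialCoord (fun x => Fm α x - Fm β x) k := by
      obtain ⟨x₁, x₂, hagree, hne2⟩ := hkα
      refine ⟨x₁, x₂, hagree, ?_⟩
      have hb := nonessential_eq hkβ x₁ x₂ hagree
      intro hcon
      have hcon' : Fm α x₁ - Fm β x₁ = Fm α x₂ - Fm β x₂ := hcon
      exact hne2 (by linarith)
    by_cases hl : ∃ l, l ≠ k ∧ EssentialCoord (fun x => Fm α x - Fm β x) l
    swap
    · -- exactly one essential coordinate k for Fα - Fβ : contradiction
      exfalso
      push_neg at hl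
      obtain ⟨ψ, hψ, hψ0⟩ := one_coord_struct hn (fun x => Fm α x - Fm β x) (HeqF α β) k hl
      have hψ' : ∀ x : Fin n → 𝒜, Fm α x - Fm β x = ψ (x k) := fun x => hψ x
      obtain ⟨⟨p, hp⟩, ⟨m', hm'⟩⟩ := psiprop α β k ψ hψ' hψ0 hkh
      have hz1 : Fm β (Function.update x₀ k p) = 0 := by
        have h1 := hψ' (Function.update x₀ k p)
        rw [Function.update_self, hp] at h1
        rcases hF01 α (Function.update x₀ k p) with h2|h2 <;>
          rcases hF01 β (Function.update x₀ k p) with h3|h3 <;> linarith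
      have hz2 : Fm β (Function.update x₀ k m') = 1 := by
        have h1 := hψ' (Function.update x₀ k m')
        rw [Function.update_self, hm'] at h1
        rcases hF01 α (Function.update x₀ k m') with h2|h2 <;>
          rcases hF01 β (Function.update x₀ k m') with h3|h3 <;> linarith
      have heqz : Fm β (Function.update x₀ k p) = Fm β (Function.update x₀ k m') :=
        nonessential_eq hkβ _ _ (fun j hj => by
          rw [Function.update_of_ne hj, Function.update_of_ne hj])
      linarith
    · obtain ⟨l, hlk, hlh⟩ := hl
      obtain ⟨A, B, b, c, b', c', hbA, hcA, hbB, hcB, hform⟩ :=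
        two_coord_struct hn (fun x => Fm α x - Fm β x) (HeqF α β) (hTdiff α β)
          k l (Ne.symm hlk) hkh hlh
      have hGknon : ∀ x y : Fin n → 𝒜, (∀ j, j ≠ k → x j = y j) → Fm β x = Fm β y :=
        nonessential_eq hkβ
      have hFα := rigid (Fm α) (Fm β) (hF01 α) (hF01 β) k l (Ne.symm hlk) A B b c hbA hcA
        hGknon hform
      -- Step B for γ
      by_cases hE : ∃ j, EssentialCoord (fun x => Fm γ x - Fm α x) j
      swap
      · -- Fγ = Fα
        push_neg at hE
        have hzero := no_coord_zero hn (fun x => Fm γ x - Fm α x) (HeqF γ α) hE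
        refine ⟨k, A, b, c, hbA, hcA, fun y => ?_⟩
        have h1 : Fm γ y - Fm α y = 0 := hzero y
        rw [← hFα y]
        linarith
      obtain ⟨j, hj⟩ := hE
      by_cases hE2 : ∃ j', j' ≠ j ∧ EssentialCoord (fun x => Fm γ x - Fm α x) j'
      · obtain ⟨j', hj'ne, hj'⟩ := hE2
        by_cases hjk : j = k
        · subst hjk
          obtain ⟨A₁, B₁, b₁, c₁, b₁', c₁', h1, h2, h3, h4, hform1⟩ :=
            two_coord_struct hn (fun x => Fm γ x - Fm α x) (HeqF γ α) (hTdiff γ α)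
              j' j hj'ne hj' hj
          have hnon : ∀ x y : Fin n → 𝒜, (∀ i, i ≠ j' → x i = y i) → Fm α x = Fm α y := by
            intro x y hxy
            rw [hFα x, hFα y, hxy j (Ne.symm hj'ne)]
          have hres := rigid (Fm γ) (Fm α) (hF01 γ) (hF01 α) j' j hj'ne A₁ B₁ b₁ c₁ h1 h2
            hnon hform1
          exact ⟨j', A₁, b₁, c₁, h1, h2, hres⟩
        · obtain ⟨A₁, B₁, b₁, c₁, b₁', c₁', h1, h2, h3, h4, hform1⟩ :=
            two_coord_struct hn (fun x => Fm γ x - Fm α x) (HeqF γ α) (hTdiff γ α)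
              j j' (Ne.symm hj'ne) hj hj'
          have hnon : ∀ x y : Fin n → 𝒜, (∀ i, i ≠ j → x i = y i) → Fm α x = Fm α y := by
            intro x y hxy
            rw [hFα x, hFα y, hxy k (fun he => hjk he.symm)]
          have hres := rigid (Fm γ) (Fm α) (hF01 γ) (hF01 α) j j' (Ne.symm hj'ne) A₁ B₁ b₁ c₁
            h1 h2 hnon hform1
          exact ⟨j, A₁, b₁, c₁, h1, h2, hres⟩
      · -- exactly one essential coordinate j for Fγ - Fα
        push_neg at hE2
        obtain ⟨ψ, hψ, hψ0⟩ := one_coord_struct hn (fun x => Fm γ x - Fm α x) (HeqF γ α) j hE2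
        have hψ' : ∀ x : Fin n → 𝒜, Fm γ x - Fm α x = ψ (x j) := fun x => hψ x
        obtain ⟨⟨p, hp⟩, ⟨m', hm'⟩⟩ := psiprop γ α j ψ hψ' hψ0 hj
        by_cases hjk : j = k
        · subst hjk
          refine ⟨j, Finset.univ.filter (fun a => (if a ∈ A then (1:ℝ) else 0) + ψ a = 1),
            p, m', ?_, ?_, ?_⟩
          · simp only [Finset.mem_filter, Finset.mem_univ, true_and]
            have h1 := hψ' (Function.update x₀ j p)
            rw [Function.update_self, hp] at h1
            have h2 := hFα (Function.update x₀ j p)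
            rw [Function.update_self] at h2
            rw [hp]
            by_cases hpA : p ∈ A
            · exfalso
              rw [if_pos hpA] at h2
              rcases hF01 γ (Function.update x₀ j p) with h5|h5 <;> linarith
            · rw [if_neg hpA]; norm_num
          · simp only [Finset.mem_filter, Finset.mem_univ, true_and]
            have h1 := hψ' (Function.update x₀ j m')
            rw [Function.update_self, hm'] at h1
            have h2 := hFα (Function.update x₀ j m')
            rw [Function.update_self] at h2
            rw [hm']
            by_cases hpA : m' ∈ A
            · rw [if_pos hpA]; norm_num
            · exfalso
              rw [if_neg hpA] at h2
              rcases hF01 γ (Function.update x₀ j m') with h5|h5 <;> linarith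
          · intro y
            simp only [Finset.mem_filter, Finset.mem_univ, true_and]
            have h1 := hψ' y
            have h2 := hFα y
            rcases hF01 γ y with h5|h5
            · rw [h5, if_neg]
              intro hcon
              linarith
            · rw [h5, if_pos]
              linarith
        · -- j ≠ k : contradiction
          exfalso
          set z := Function.update (Function.update x₀ j p) k b with hz
          have e1 := hψ' z
          have ezj : z j = p := by
            rw [hz, Function.update_of_ne hjk, Function.update_self]
          have ezk : z k = b := by
            rw [hz, Function.update_self]
          have e2 := hFα z
          rw [ezk, if_pos hbA] at e2
          rw [ezj, hp] at e1
          rcases hF01 γ z with h5|h5 <;> linarith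
  -- conclude
  intro α'
  simp only [hFg] at hdiff ⊢
  obtain ⟨α, β, hnediff⟩ := hdiff
  have hsym : ∃ (a b : 𝒜) (k : Fin n), EssentialCoord (Fm a) k ∧ ¬ EssentialCoord (Fm b) k := by
    by_contra hcon
    push_neg at hcon
    apply hnediff
    ext i
    simp only [Set.mem_setOf_eq]
    exact ⟨fun h => hcon α β i h, fun h => hcon β α i h⟩
  obtain ⟨a, b, k, hka, hkb⟩ := hsym
  obtain ⟨k', A', p, m', hp, hm, hform⟩ := main a b k hka hkb α'
  have hset : {i : Fin n | EssentialCoord (Fm α') i} = {k'} := by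
    ext i
    simp only [Set.mem_setOf_eq, Set.mem_singleton_iff]
    constructor
    · rintro ⟨x, y, hagree, hne2⟩
      by_contra hik
      apply hne2
      rw [hform x, hform y, hagree k' (fun he => hik he.symm)]
    · intro hik
      rw [hik]
      refine ⟨Function.update x₀ k' p, Function.update x₀ k' m',
        fun j hj => by rw [Function.update_of_ne hj, Function.update_of_ne hj], ?_⟩
      rw [hform, hform, Function.update_self, Function.update_self, if_pos hp, if_neg hm]
      norm_num
  rw [hset, Set.ncard_singleton]
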